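/- arXiv:2202.07514 — 4 statements merged into one kernel-verified Lean document; each statement's English description precedes it below -/
import Mathlib

section
/- Under these hypotheses, the subspace Vₙ = span{ (Π_{i∈S} Bᵢ) ψ : S ⊆ {1,…,n} } has dimension exactly 2ⁿ, and there exists a linear isometric equivalence e : Vₙ ≃ (ℂ²)^{⊗n} such that for every v ∈ Vₙ and every i ∈ {1,…,n}, e(Aᵢ v) = Xᵢ e(v) and e(Bᵢ v) = Zᵢ e(v) (this is well defined since Aᵢ v, Bᵢ v ∈ Vₙ by invariance of Vₙ). -/
open scoped symmDiff


/-- The Pauli matrix `X = !![0, 1; 1, 0]`. -/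
noncomputable def PauliX : Matrix (Fin 2) (Fin 2) ℂ := !![0, 1; 1, 0]

/-- The Pauli matrix `Z = !![1, 0; 0, -1]`. -/
noncomputable def PauliZ : Matrix (Fin 2) (Fin 2) ℂ := !![1, 0; 0, -1]

/-- The operator on `(ℂ²)^{⊗n}` (realised as `EuclideanSpace ℂ (Fin n → Fin 2)`)
acting as the one-qubit matrix `M` on the `i`-th tensor factor and as the identity
on all other factors. -/
noncomputable def tensorFactor (n : ℕ) (M : Matrix (Fin 2) (Fin 2) ℂ) (i : Fin n) :
    Matrix (Fin n → Fin 2) (Fin n → Fin 2) ℂ :=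
  Matrix.of fun f g =>
    M (f i) (g i) * ∏ j ∈ Finset.univ.erase i, (if f j = g j then (1 : ℂ) else 0)

/-- The product `Π_{i ∈ S} T i` of the operators `T i`, `i ∈ S`, multiplied in
increasing order of the index; all products used below are over pairwise commuting
operators, so the order of the factors is irrelevant. -/
noncomputable def prodOver {H : Type*} [NormedAddCommGroup H] [InnerProductSpace ℂ H]
    {n : ℕ} (T : Fin n → H →L[ℂ] H) (S : Finset (Fin n)) : H →L[ℂ] H :=
  ((S.sort (· ≤ ·)).map T).prod

namespace S12

variable {H : Type*} [NormedAddCommGroup H] [InnerProductSpace ℂ H] {n : ℕ}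
variable {C : Fin n → H →L[ℂ] H}

lemma prodOver_empty : prodOver C (∅ : Finset (Fin n)) = 1 := by
  simp [prodOver]

lemma prodOver_insert (hc : ∀ i j, Commute (C i) (C j)) {S : Finset (Fin n)} {i : Fin n}
    (hi : i ∉ S) : prodOver C (insert i S) = C i * prodOver C S := by
  have hperm : (((insert i S).sort (· ≤ ·)).map C).Perm (C i :: (S.sort (· ≤ ·)).map C) := by
    rw [← List.map_cons]
    apply List.Perm.map
    rw [← Multiset.coe_eq_coe]
    show ((insert i S).sort (· ≤ ·) : Multiset (Fin n)) = ↑(i :: S.sort (· ≤ ·))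
    rw [Finset.sort_eq]
    show (insert i S).val = i ::ₘ ↑(S.sort (· ≤ ·))
    rw [Finset.sort_eq, Finset.insert_val, Multiset.ndinsert_of_notMem hi]
  have hpw : List.Pairwise Commute (((insert i S).sort (· ≤ ·)).map C) := by
    rw [List.pairwise_map]
    exact List.pairwise_of_forall (fun a b => hc a b)
  unfold prodOver
  rw [hperm.prod_eq' hpw, List.prod_cons]

lemma commute_prodOver (hc : ∀ i j, Commute (C i) (C j)) {T : H →L[ℂ] H} {S : Finset (Fin n)}
    (h : ∀ j ∈ S, Commute T (C j)) : Commute T (prodOver C S) := by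
  induction S using Finset.induction_on with
  | empty => rw [prodOver_empty]; exact Commute.one_right T
  | @insert i S hi ih =>
    rw [prodOver_insert hc hi]
    exact (h i (Finset.mem_insert_self i S)).mul_right
      (ih fun j hj => h j (Finset.mem_insert_of_mem hj))

lemma mul_prodOver (hc : ∀ i j, Commute (C i) (C j)) (h2 : ∀ i, C i * C i = 1)
    (i : Fin n) (S : Finset (Fin n)) : C i * prodOver C S = prodOver C (S ∆ {i}) := by
  by_cases hi : i ∈ S
  · have hd : S ∆ {i} = S.erase i := by
      ext j
      simp only [Finset.mem_symmDiff, Finset.mem_erase, Finset.mem_singleton]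
      by_cases hj : j = i <;> simp [hj, hi]
    have hS : S = insert i (S.erase i) := (Finset.insert_erase hi).symm
    rw [hd]
    conv_lhs => rw [hS]
    rw [prodOver_insert hc (Finset.notMem_erase i S), ← mul_assoc, h2, one_mul]
  · have hd : S ∆ {i} = insert i S := by
      ext j
      simp only [Finset.mem_symmDiff, Finset.mem_insert, Finset.mem_singleton]
      by_cases hj : j = i <;> simp [hj, hi] <;> tauto
    rw [hd, prodOver_insert hc hi]

lemma prodOver_mul (hc : ∀ i j, Commute (C i) (C j)) (h2 : ∀ i, C i * C i = 1)
    (S T : Finset (Fin n)) : prodOver C S * prodOver C T = prodOver C (S ∆ T) := by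
  induction S using Finset.induction_on with
  | empty =>
    rw [prodOver_empty, one_mul]
    congr 1
    rw [symmDiff_comm, ← Finset.bot_eq_empty, symmDiff_bot]
  | @insert i S hi ih =>
    have hins : insert i S = S ∆ {i} := by
      ext j
      simp only [Finset.mem_symmDiff, Finset.mem_insert, Finset.mem_singleton]
      by_cases hj : j = i <;> simp [hj, hi] <;> tauto
    rw [prodOver_insert hc hi, mul_assoc, ih, mul_prodOver hc h2]
    congr 1
    rw [hins, symmDiff_assoc, symmDiff_comm T {i}, ← symmDiff_assoc]

lemma prodOver_sq (hc : ∀ i j, Commute (C i) (C j)) (h2 : ∀ i, C i * C i = 1)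
    (S : Finset (Fin n)) : prodOver C S * prodOver C S = 1 := by
  rw [prodOver_mul hc h2, symmDiff_self, Finset.bot_eq_empty, prodOver_empty]

lemma prodOver_adj (hc : ∀ i j, Commute (C i) (C j))
    (hsa : ∀ i (x y : H), (inner ℂ (C i x) y : ℂ) = inner ℂ x (C i y)) (S : Finset (Fin n)) :
    ∀ x y : H, (inner ℂ (prodOver C S x) y : ℂ) = inner ℂ x (prodOver C S y) := by
  induction S using Finset.induction_on with
  | empty => intro x y; rw [prodOver_empty]; rfl
  | @insert i S hi ih =>
    intro x y
    rw [prodOver_insert hc hi]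
    have h1 : (C i * prodOver C S) x = C i (prodOver C S x) := rfl
    have h2 : (C i * prodOver C S) y = prodOver C S (C i y) := by
      rw [(commute_prodOver hc (fun j _ => hc i j)).eq]; rfl
    rw [h1, h2, hsa, ih]

end S12

/-! ### Euclidean side -/

namespace E

variable {n : ℕ}

noncomputable def chi : Fin 2 → ℂ := fun a => if a = 0 then 1 else -1

lemma chi_sq (a : Fin 2) : chi a * chi a = 1 := by fin_cases a <;> simp [chi]

lemma chi_succ (a : Fin 2) : chi (a + 1) = -chi a := by fin_cases a <;> simp [chi] <;> decide

lemma chi_eq_pow (a : Fin 2) : chi a = (-1 : ℂ) ^ (a : ℕ) := by fin_cases a <;> simp [chi]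

noncomputable def sgn (S : Finset (Fin n)) (f : Fin n → Fin 2) : ℂ := ∏ i ∈ S, chi (f i)

def wt (f : Fin n → Fin 2) : ℕ := ∑ i, (f i : ℕ)

noncomputable def eps (f : Fin n → Fin 2) : ℂ := (-1 : ℂ) ^ (wt f / 2)

noncomputable def w (S : Finset (Fin n)) : EuclideanSpace ℂ (Fin n → Fin 2) :=
  WithLp.toLp 2 (fun f => ((Real.sqrt 2)⁻¹ : ℝ) ^ n * (sgn S f * eps f))

lemma sgn_symmDiff (S T : Finset (Fin n)) (f : Fin n → Fin 2) :
    sgn (S ∆ T) f = sgn S f * sgn T f := by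
  unfold sgn
  have hdisj : Disjoint (S ∆ T) (S ∩ T) := disjoint_symmDiff_inf S T
  have h1 : (∏ i ∈ S ∆ T, chi (f i)) * ∏ i ∈ S ∩ T, chi (f i) = ∏ i ∈ S ∪ T, chi (f i) := by
    rw [← Finset.prod_union hdisj]
    congr 1
    have := symmDiff_sup_inf S T
    simpa using this
  have h2 : (∏ i ∈ S ∪ T, chi (f i)) * ∏ i ∈ S ∩ T, chi (f i)
      = (∏ i ∈ S, chi (f i)) * ∏ i ∈ T, chi (f i) := Finset.prod_union_inter
  have h3 : (∏ i ∈ S ∩ T, chi (f i)) * ∏ i ∈ S ∩ T, chi (f i) = 1 := by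
    rw [← Finset.prod_mul_distrib]
    exact Finset.prod_eq_one fun i _ => chi_sq (f i)
  calc ∏ i ∈ S ∆ T, chi (f i)
      = (∏ i ∈ S ∆ T, chi (f i)) * ((∏ i ∈ S ∩ T, chi (f i)) * ∏ i ∈ S ∩ T, chi (f i)) := by
        rw [h3, mul_one]
    _ = ((∏ i ∈ S ∪ T, chi (f i)) * ∏ i ∈ S ∩ T, chi (f i)) := by rw [← mul_assoc, h1]
    _ = (∏ i ∈ S, chi (f i)) * ∏ i ∈ T, chi (f i) := h2

lemma sgn_singleton (i : Fin n) (f : Fin n → Fin 2) : sgn {i} f = chi (f i) := by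
  simp [sgn]

lemma sgn_univ (f : Fin n → Fin 2) : sgn Finset.univ f = (-1 : ℂ) ^ (wt f) := by
  unfold sgn wt
  rw [← Finset.prod_pow_eq_pow_sum]
  exact Finset.prod_congr rfl fun i _ => chi_eq_pow (f i)

lemma sum_sgn (U : Finset (Fin n)) :
    ∑ f : Fin n → Fin 2, sgn U f = if U = ∅ then (2 : ℂ) ^ n else 0 := by
  have key : ∀ f : Fin n → Fin 2, sgn U f = ∏ i, (if i ∈ U then chi (f i) else 1) := by
    intro f
    rw [Finset.prod_ite_mem Finset.univ U (fun i => chi (f i)), Finset.univ_inter]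
    rfl
  calc ∑ f : Fin n → Fin 2, sgn U f
      = ∑ f ∈ Fintype.piFinset (fun _ : Fin n => (Finset.univ : Finset (Fin 2))),
          ∏ i, (if i ∈ U then chi (f i) else 1) := by
        rw [Fintype.piFinset_univ]; exact Finset.sum_congr rfl fun f _ => key f
    _ = ∏ i : Fin n, ∑ x : Fin 2, (if i ∈ U then chi x else 1) :=
        (Finset.prod_univ_sum (fun _ : Fin n => (Finset.univ : Finset (Fin 2)))
          (fun i x => if i ∈ U then chi x else 1)).symm
    _ = if U = ∅ then (2 : ℂ) ^ n else 0 := by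
        by_cases hU : U = ∅
        · simp [hU]
        · obtain ⟨j, hj⟩ := Finset.nonempty_iff_ne_empty.mpr hU
          rw [if_neg hU]
          apply Finset.prod_eq_zero (Finset.mem_univ j)
          simp only [if_pos hj]
          rw [Fin.sum_univ_two]
          simp [chi]

end E

namespace E

lemma fin2_cases (a : Fin 2) : a = 0 ∨ a = 1 := by omega

lemma conj_chi (a : Fin 2) : (starRingEnd ℂ) (chi a) = chi a := by
  fin_cases a <;> simp [chi]

lemma conj_sgn (S : Finset (Fin n)) (f : Fin n → Fin 2) :
    (starRingEnd ℂ) (sgn S f) = sgn S f := by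
  unfold sgn
  rw [map_prod]
  exact Finset.prod_congr rfl fun i _ => conj_chi (f i)

lemma conj_eps (f : Fin n → Fin 2) : (starRingEnd ℂ) (eps f) = eps f := by
  unfold eps
  rw [map_pow]
  simp

lemma eps_sq (f : Fin n → Fin 2) : eps f * eps f = 1 := by
  unfold eps
  rw [← pow_add, ← two_mul, pow_mul]
  norm_num

lemma inv_sqrt_two_sq : ((Real.sqrt 2)⁻¹ : ℝ) ^ 2 = 2⁻¹ := by
  rw [inv_pow, Real.sq_sqrt (by norm_num : (0:ℝ) ≤ 2)]

lemma w_orth : Orthonormal ℂ (w (n := n)) := by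
  rw [orthonormal_iff_ite]
  intro S T
  have hterm : ∀ f : Fin n → Fin 2,
      (starRingEnd ℂ) (w S f) * w T f = ((2 : ℂ)⁻¹) ^ n * sgn (S ∆ T) f := by
    intro f
    unfold w
    simp only [PiLp.toLp_apply]
    rw [map_mul, map_mul, conj_sgn, conj_eps, map_pow, Complex.conj_ofReal, sgn_symmDiff]
    have h2 : (((Real.sqrt 2)⁻¹ : ℝ) : ℂ) ^ n * (((Real.sqrt 2)⁻¹ : ℝ) : ℂ) ^ n = ((2:ℂ)⁻¹) ^ n := by
      rw [← mul_pow, ← Complex.ofReal_mul, ← sq, inv_sqrt_two_sq]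
      push_cast
      ring
    calc ((((Real.sqrt 2)⁻¹ : ℝ) : ℂ)) ^ n * (sgn S f * eps f) *
          (((((Real.sqrt 2)⁻¹ : ℝ) : ℂ)) ^ n  * (sgn T f * eps f))
        = (((((Real.sqrt 2)⁻¹ : ℝ) : ℂ)) ^ n * ((((Real.sqrt 2)⁻¹ : ℝ) : ℂ)) ^ n) *
            ((sgn S f * sgn T f) * (eps f * eps f)) := by ring
      _ = ((2 : ℂ)⁻¹) ^ n * (sgn S f * sgn T f) := by rw [h2, eps_sq, mul_one]
  calc (inner ℂ (w S) (w T) : ℂ) = ∑ f : Fin n → Fin 2, (starRingEnd ℂ) (w S f) * w T f := by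
        rw [PiLp.inner_apply]; exact Finset.sum_congr rfl fun f _ => by rw [RCLike.inner_apply]; ring
    _ = ∑ f : Fin n → Fin 2, ((2 : ℂ)⁻¹) ^ n * sgn (S ∆ T) f :=
        Finset.sum_congr rfl fun f _ => hterm f
    _ = ((2 : ℂ)⁻¹) ^ n * ∑ f : Fin n → Fin 2, sgn (S ∆ T) f := by rw [Finset.mul_sum]
    _ = if S = T then 1 else 0 := by
        rw [sum_sgn]
        by_cases h : S = T
        · have : S ∆ T = ∅ := by rw [h, symmDiff_self]; rfl
          rw [if_pos this, if_pos h]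
          rw [← mul_pow]
          norm_num
        · have : ¬ (S ∆ T = ∅) := by
            rw [← Finset.bot_eq_empty, symmDiff_eq_bot]
            exact h
          rw [if_neg this, if_neg h, mul_zero]

end E

namespace E

lemma PauliZ_diag (a : Fin 2) : PauliZ a a = chi a := by
  fin_cases a <;> simp [PauliZ, chi]

lemma PauliZ_off (a b : Fin 2) (h : a ≠ b) : PauliZ a b = 0 := by
  fin_cases a <;> fin_cases b <;> simp_all [PauliZ]

lemma PauliX_diag (a b : Fin 2) (h : a = b) : PauliX a b = 0 := by
  subst h; fin_cases a <;> simp [PauliX]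

lemma PauliX_off (a : Fin 2) : PauliX a (a + 1) = 1 := by
  fin_cases a <;> simp [PauliX] <;> decide

lemma toEL_apply (M : Matrix (Fin n → Fin 2) (Fin n → Fin 2) ℂ)
    (x : EuclideanSpace ℂ (Fin n → Fin 2)) (f : Fin n → Fin 2) :
    Matrix.toEuclideanLin M x f = ∑ g, M f g * x g := by
  rw [Matrix.toEuclideanLin_apply]
  rfl

lemma Z_apply (i : Fin n) (x : EuclideanSpace ℂ (Fin n → Fin 2)) (f : Fin n → Fin 2) :
    Matrix.toEuclideanLin (tensorFactor n PauliZ i) x f = chi (f i) * x f := by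
  rw [toEL_apply]
  rw [Finset.sum_eq_single f]
  · unfold tensorFactor
    have hd : ∏ j ∈ Finset.univ.erase i, (if f j = f j then (1:ℂ) else 0) = 1 :=
      Finset.prod_eq_one fun j _ => by simp
    show PauliZ (f i) (f i) * _ * x f = chi (f i) * x f
    rw [hd, mul_one]
    congr 1
    exact PauliZ_diag (f i)
  · intro g _ hg
    unfold tensorFactor
    by_cases hall : ∀ j, j ≠ i → f j = g j
    · have hgi : f i ≠ g i := by
        intro h
        apply hg
        funext j
        by_cases hj : j = i
        · rw [hj]; exact h.symm
        · exact (hall j hj).symm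
      have : PauliZ (f i) (g i) = 0 := PauliZ_off _ _ hgi
      show PauliZ (f i) (g i) * _ * x g = 0
      rw [this, zero_mul, zero_mul]
    · push_neg at hall
      obtain ⟨j, hj, hfj⟩ := hall
      have : ∏ k ∈ Finset.univ.erase i, (if f k = g k then (1:ℂ) else 0) = 0 :=
        Finset.prod_eq_zero (Finset.mem_erase.mpr ⟨hj, Finset.mem_univ j⟩) (by rw [if_neg hfj])
      show PauliZ (f i) (g i) * _ * x g = 0
      rw [this, mul_zero, zero_mul]
  · intro h
    exact absurd (Finset.mem_univ f) h

lemma X_apply (i : Fin n) (x : EuclideanSpace ℂ (Fin n → Fin 2)) (f : Fin n → Fin 2) :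
    Matrix.toEuclideanLin (tensorFactor n PauliX i) x f
      = x (Function.update f i (f i + 1)) := by
  rw [toEL_apply]
  rw [Finset.sum_eq_single (Function.update f i (f i + 1))]
  · unfold tensorFactor
    have hd : ∏ j ∈ Finset.univ.erase i,
        (if f j = Function.update f i (f i + 1) j then (1:ℂ) else 0) = 1 :=
      Finset.prod_eq_one fun j hj => by
        rw [Function.update_of_ne (Finset.mem_erase.mp hj).1]
        simp
    show PauliX (f i) (Function.update f i (f i + 1) i) * _ * _ = _
    rw [hd, mul_one, Function.update_self]
    rw [PauliX_off, one_mul]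
  · intro g _ hg
    unfold tensorFactor
    by_cases hall : ∀ j, j ≠ i → f j = g j
    · have hgi : g i ≠ f i + 1 := by
        intro h
        apply hg
        funext j
        by_cases hj : j = i
        · rw [hj, Function.update_self]; exact h
        · rw [Function.update_of_ne hj]; exact (hall j hj).symm
      have hgi2 : f i = g i := by omega
      have : PauliX (f i) (g i) = 0 := PauliX_diag _ _ hgi2
      show PauliX (f i) (g i) * _ * x g = 0
      rw [this, zero_mul, zero_mul]
    · push_neg at hall
      obtain ⟨j, hj, hfj⟩ := hall
      have : ∏ k ∈ Finset.univ.erase i, (if f k = g k then (1:ℂ) else 0) = 0 :=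
        Finset.prod_eq_zero (Finset.mem_erase.mpr ⟨hj, Finset.mem_univ j⟩) (by rw [if_neg hfj])
      show PauliX (f i) (g i) * _ * x g = 0
      rw [this, mul_zero, zero_mul]
  · intro h
    exact absurd (Finset.mem_univ _) h

end E

namespace E

lemma sgn_update (S : Finset (Fin n)) (i : Fin n) (f : Fin n → Fin 2) :
    sgn S (Function.update f i (f i + 1)) = (if i ∈ S then (-1:ℂ) else 1) * sgn S f := by
  by_cases hi : i ∈ S
  · rw [if_pos hi]
    unfold sgn
    rw [← Finset.mul_prod_erase S _ hi, ← Finset.mul_prod_erase S (fun j => chi (f j)) hi,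
      Function.update_self]
    have he : ∏ j ∈ S.erase i, chi (Function.update f i (f i + 1) j)
        = ∏ j ∈ S.erase i, chi (f j) :=
      Finset.prod_congr rfl fun j hj => by
        rw [Function.update_of_ne (Finset.mem_erase.mp hj).1]
    rw [he, chi_succ]
    ring
  · rw [if_neg hi, one_mul]
    unfold sgn
    exact Finset.prod_congr rfl fun j hj => by
      rw [Function.update_of_ne (fun h : j = i => hi (by rwa [h] at hj))]

lemma pow_half_succ (t : ℕ) : (-1:ℂ)^((t+1)/2) = (-1)^t * (-1)^(t/2) := by
  rcases Nat.even_or_odd t with ⟨m, hm⟩ | ⟨m, hm⟩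
  · have h1 : (t+1)/2 = t/2 := by omega
    have h2 : (-1:ℂ)^t = 1 := Even.neg_one_pow ⟨m, hm⟩
    rw [h1, h2, one_mul]
  · have h1 : (t+1)/2 = t/2 + 1 := by omega
    have h2 : (-1:ℂ)^t = -1 := Odd.neg_one_pow ⟨m, by omega⟩
    rw [h1, h2, pow_succ]
    ring

lemma wt_update (i : Fin n) (f : Fin n → Fin 2) (a : Fin 2) :
    wt (Function.update f i a) = (a : ℕ) + ∑ j ∈ Finset.univ.erase i, (f j : ℕ) := by
  unfold wt
  rw [← Finset.add_sum_erase Finset.univ (fun j => ((Function.update f i a j : Fin 2) : ℕ))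
    (Finset.mem_univ i)]
  congr 1
  · rw [Function.update_self]
  · exact Finset.sum_congr rfl fun j hj => by
      rw [Function.update_of_ne (Finset.mem_erase.mp hj).1]

lemma wt_split (i : Fin n) (f : Fin n → Fin 2) :
    wt f = (f i : ℕ) + ∑ j ∈ Finset.univ.erase i, (f j : ℕ) := by
  unfold wt
  rw [← Finset.add_sum_erase Finset.univ _ (Finset.mem_univ i)]

lemma eps_update (i : Fin n) (f : Fin n → Fin 2) :
    eps (Function.update f i (f i + 1)) = (-1:ℂ)^(wt f) * chi (f i) * eps f := by
  have hw' := wt_update i f (f i + 1)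
  have hw := wt_split i f
  set t := ∑ j ∈ Finset.univ.erase i, (f j : ℕ) with ht
  rcases fin2_cases (f i) with h | h
  · have h1 : ((f i + 1 : Fin 2) : ℕ) = 1 := by rw [h]; rfl
    have h0 : ((f i : Fin 2) : ℕ) = 0 := by rw [h]; rfl
    unfold eps
    rw [hw', hw, h1, h0, chi_eq_pow, h0]
    rw [show 1 + t = t + 1 from by omega, pow_half_succ]
    ring
  · have h1 : ((f i + 1 : Fin 2) : ℕ) = 0 := by rw [h]; rfl
    have h0 : ((f i : Fin 2) : ℕ) = 1 := by rw [h]; rfl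
    unfold eps
    rw [hw', hw, h1, h0, chi_eq_pow, h0]
    rw [show (0 + t) = t from by omega, show (1 + t) = t + 1 from by omega, pow_half_succ]
    have : (-1:ℂ)^(t+1) = (-1)^t * (-1) := pow_succ _ _
    rw [this]
    have hsq : (-1:ℂ)^t * (-1)^t = 1 := by
      rw [← pow_add]; exact Even.neg_one_pow ⟨t, by omega⟩
    linear_combination (-((-1:ℂ)^(t/2))) * hsq

lemma univ_symmDiff_singleton (i : Fin n) :
    (Finset.univ : Finset (Fin n)) ∆ {i} = Finset.univ.erase i := by
  ext j
  simp only [Finset.mem_symmDiff, Finset.mem_univ, Finset.mem_singleton, Finset.mem_erase]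
  by_cases hj : j = i <;> simp [hj]

lemma sgn_erase (i : Fin n) (f : Fin n → Fin 2) :
    sgn (Finset.univ.erase i) f = (-1:ℂ)^(wt f) * chi (f i) := by
  rw [← univ_symmDiff_singleton, sgn_symmDiff, sgn_univ, sgn_singleton]

lemma Zw (i : Fin n) (S : Finset (Fin n)) :
    Matrix.toEuclideanLin (tensorFactor n PauliZ i) (w S) = w (S ∆ {i}) := by
  ext f
  rw [Z_apply]
  unfold w
  simp only [PiLp.toLp_apply]
  rw [sgn_symmDiff, sgn_singleton]
  ring

lemma Xw (i : Fin n) (S : Finset (Fin n)) :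
    Matrix.toEuclideanLin (tensorFactor n PauliX i) (w S)
      = (if i ∈ S then (-1:ℂ) else 1) • w (S ∆ Finset.univ.erase i) := by
  ext f
  rw [X_apply]
  have hsmul : ((if i ∈ S then (-1:ℂ) else 1) • w (S ∆ Finset.univ.erase i)) f
      = (if i ∈ S then (-1:ℂ) else 1) * w (S ∆ Finset.univ.erase i) f := rfl
  rw [hsmul]
  unfold w
  simp only [PiLp.toLp_apply]
  rw [sgn_update, eps_update, sgn_symmDiff, sgn_erase]
  ring

end E


/-- under the maximal-violation hypotheses for `Iₙ` (setup as in
Statement 9), the subspace `Vₙ = span{(Π_{i∈S} Bᵢ)ψ : S ⊆ {1,…,n}}` has dimension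
exactly `2ⁿ`, and there is a linear isometric equivalence `e : Vₙ ≃ (ℂ²)^{⊗n}`
(the right-hand side realised as `EuclideanSpace ℂ (Fin n → Fin 2)`) with
`e(Aᵢ v) = Xᵢ e(v)` and `e(Bᵢ v) = Zᵢ e(v)` for every `v ∈ Vₙ` and every `i`
(well defined since `Aᵢ v, Bᵢ v ∈ Vₙ` by invariance, expressed here by
quantifying over the membership proofs). -/
theorem stmt12 {H : Type*} [NormedAddCommGroup H] [InnerProductSpace ℂ H]
    (n : ℕ) (hn : 3 ≤ n)
    (A B : Fin n → H →L[ℂ] H)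
    (hAsa : ∀ i (x y : H), (inner ℂ (A i x) y : ℂ) = inner ℂ x (A i y))
    (hBsa : ∀ i (x y : H), (inner ℂ (B i x) y : ℂ) = inner ℂ x (B i y))
    (hAinv : ∀ i (x : H), A i (A i x) = x)
    (hBinv : ∀ i (x : H), B i (B i x) = x)
    (hAA : ∀ i j, i ≠ j → ∀ x : H, A i (A j x) = A j (A i x))
    (hAB : ∀ i j, i ≠ j → ∀ x : H, A i (B j x) = B j (A i x))
    (hBB : ∀ i j, i ≠ j → ∀ x : H, B i (B j x) = B j (B i x))
    (ψ : H) (hψ : ‖ψ‖ = 1)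
    (hplus : ∀ i, A i (prodOver B (Finset.univ.erase i) ψ) = ψ)
    (hminus : ∀ S : Finset (Fin n), S.card = 3 →
      prodOver A S (prodOver B Sᶜ ψ) = -ψ)
    (V : Submodule ℂ H)
    (hV : V = Submodule.span ℂ {v : H | ∃ S : Finset (Fin n), v = prodOver B S ψ}) :
    Module.finrank ℂ V = 2 ^ n ∧
    ∃ e : V ≃ₗᵢ[ℂ] EuclideanSpace ℂ (Fin n → Fin 2),
      ∀ (v : H) (hv : v ∈ V) (i : Fin n) (hAv : A i v ∈ V) (hBv : B i v ∈ V),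
        e ⟨A i v, hAv⟩ = Matrix.toEuclideanLin (tensorFactor n PauliX i) (e ⟨v, hv⟩) ∧
        e ⟨B i v, hBv⟩ = Matrix.toEuclideanLin (tensorFactor n PauliZ i) (e ⟨v, hv⟩) := by
  classical
  -- operator-level commutation and involution facts
  have hBc : ∀ i j, Commute (B i) (B j) := by
    intro i j
    rcases eq_or_ne i j with rfl | h
    · exact Commute.refl _
    · exact ContinuousLinearMap.ext fun x => by
        simpa [ContinuousLinearMap.mul_apply] using hBB i j h x
  have hAc : ∀ i j, Commute (A i) (A j) := by
    intro i j
    rcases eq_or_ne i j with rfl | h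
    · exact Commute.refl _
    · exact ContinuousLinearMap.ext fun x => by
        simpa [ContinuousLinearMap.mul_apply] using hAA i j h x
  have hABc : ∀ i j, i ≠ j → Commute (A i) (B j) := fun i j h =>
    ContinuousLinearMap.ext fun x => by
      simpa [ContinuousLinearMap.mul_apply] using hAB i j h x
  have hB2 : ∀ i, B i * B i = 1 := fun i =>
    ContinuousLinearMap.ext fun x => by
      simpa [ContinuousLinearMap.mul_apply] using hBinv i x
  set b : Finset (Fin n) → H := fun S => prodOver B S ψ with hb
  have hbS : ∀ S, b S = prodOver B S ψ := fun S => rfl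
  have hbempty : b ∅ = ψ := by rw [hbS, S12.prodOver_empty]; rfl
  have hBb : ∀ (i : Fin n) S, B i (b S) = b (symmDiff S {i}) := by
    intro i S
    rw [hbS, hbS]
    calc B i (prodOver B S ψ) = (B i * prodOver B S) ψ := rfl
      _ = prodOver B (symmDiff S {i}) ψ := by rw [S12.mul_prodOver hBc hB2]
  have d1 : ∀ i, A i ψ = b (Finset.univ.erase i) := by
    intro i
    conv_lhs => rw [← hplus i, hAinv]
  -- the key three-party relation
  have d2 : ∀ j k, j ≠ k → A j (A k (B j (B k ψ))) = -ψ := by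
    intro j k hjk
    have hex : (({j, k} : Finset (Fin n))ᶜ).Nonempty := by
      rw [← Finset.card_pos, Finset.card_compl]
      have h1 : ({j, k} : Finset (Fin n)).card ≤ 2 :=
        (Finset.card_insert_le _ _).trans (by simp)
      have h2 : Fintype.card (Fin n) = n := Fintype.card_fin n
      omega
    obtain ⟨i, hi⟩ := hex
    rw [Finset.mem_compl] at hi
    have hij : i ≠ j := fun h => hi (by rw [h]; simp)
    have hik : i ≠ k := fun h => hi (by rw [h]; simp)
    have hjknotmem : j ∉ ({k} : Finset (Fin n)) := by simpa using hjk
    have hinotmem : i ∉ ({j, k} : Finset (Fin n)) := hi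
    have hcard : ({i, j, k} : Finset (Fin n)).card = 3 := by
      rw [Finset.card_insert_of_notMem hinotmem, Finset.card_insert_of_notMem hjknotmem,
        Finset.card_singleton]
    have hmin := hminus {i, j, k} hcard
    have eS : prodOver A ({i, j, k} : Finset (Fin n)) = A i * (A j * (A k * 1)) := by
      rw [show ({i, j, k} : Finset (Fin n)) = insert i (insert j {k}) from rfl]
      rw [S12.prodOver_insert hAc hinotmem, S12.prodOver_insert hAc hjknotmem,
        show ({k} : Finset (Fin n)) = insert k ∅ from rfl,
        S12.prodOver_insert hAc (Finset.notMem_empty k), S12.prodOver_empty]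
    have hScompl : ({i, j, k} : Finset (Fin n))ᶜ
        = symmDiff ({j, k} : Finset (Fin n)) (Finset.univ.erase i) := by
      ext m
      simp only [Finset.mem_compl, Finset.mem_insert, Finset.mem_singleton,
        Finset.mem_symmDiff, Finset.mem_erase, Finset.mem_univ, and_true]
      by_cases h1 : m = i <;> by_cases h2 : m = j <;> by_cases h3 : m = k <;>
        simp [h1, h2, h3] <;> tauto
    have eJK : prodOver B ({j, k} : Finset (Fin n)) = B j * (B k * 1) := by
      rw [show ({j, k} : Finset (Fin n)) = insert j {k} from rfl]
      rw [S12.prodOver_insert hBc hjknotmem,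
        show ({k} : Finset (Fin n)) = insert k ∅ from rfl,
        S12.prodOver_insert hBc (Finset.notMem_empty k), S12.prodOver_empty]
    have eC : prodOver B (({i, j, k} : Finset (Fin n))ᶜ)
        = (B j * (B k * 1)) * prodOver B (Finset.univ.erase i) := by
      rw [hScompl, ← S12.prodOver_mul hBc hB2, eJK]
    rw [eS, eC] at hmin
    simp only [ContinuousLinearMap.mul_apply, ContinuousLinearMap.one_apply] at hmin
    rw [hAA i j hij, hAA i k hik, hAB i j hij, hAB i k hik, hplus i] at hmin
    exact hmin
  -- anticommutation on ψ, mixed indices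
  have d3 : ∀ p q, p ≠ q → A p (B p ψ) = -(B q (A q ψ)) := by
    intro p q hpq
    have h2 := congrArg (fun z => B q (A q z)) (d2 p q hpq)
    simp only [map_neg] at h2
    rw [hAA q p hpq.symm, hAinv q, ← hAB p q hpq, hBB q p hpq.symm, hBinv q] at h2
    exact h2
  -- anticommutation on ψ, same index
  have d4 : ∀ p, A p (B p ψ) = -(B p (A p ψ)) := by
    intro p
    have hexq : (({p} : Finset (Fin n))ᶜ).Nonempty := by
      rw [← Finset.card_pos, Finset.card_compl]
      have h2 : Fintype.card (Fin n) = n := Fintype.card_fin n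
      simp only [Finset.card_singleton]
      omega
    obtain ⟨q, hq⟩ := hexq
    rw [Finset.mem_compl, Finset.mem_singleton] at hq
    have hexr : (({p, q} : Finset (Fin n))ᶜ).Nonempty := by
      rw [← Finset.card_pos, Finset.card_compl]
      have h1 : ({p, q} : Finset (Fin n)).card ≤ 2 :=
        (Finset.card_insert_le _ _).trans (by simp)
      have h2 : Fintype.card (Fin n) = n := Fintype.card_fin n
      omega
    obtain ⟨r, hr⟩ := hexr
    rw [Finset.mem_compl] at hr
    have hrp : r ≠ p := fun h => hr (by rw [h]; simp)
    have hrq : r ≠ q := fun h => hr (by rw [h]; simp)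
    have e1 : A p (B p ψ) = -(B q (A q ψ)) := d3 p q (Ne.symm hq)
    have e2 : A r (B r ψ) = -(B q (A q ψ)) := d3 r q hrq
    have e3 : A r (B r ψ) = -(B p (A p ψ)) := d3 r p hrp
    rw [e1, ← e2, e3]
  -- action of A i on the b S
  have d5 : ∀ (i : Fin n) S, A i (b S)
      = (if i ∈ S then (-1:ℂ) else 1) • b (symmDiff S (Finset.univ.erase i)) := by
    intro i S
    by_cases hiS : i ∈ S
    · rw [if_pos hiS]
      have herase : i ∉ S.erase i := Finset.notMem_erase i S
      have hSdecomp : prodOver B S = B i * prodOver B (S.erase i) := by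
        rw [S12.mul_prodOver hBc hB2]
        congr 1
        ext m
        simp only [Finset.mem_symmDiff, Finset.mem_erase, Finset.mem_singleton]
        by_cases hm : m = i <;> simp [hm, hiS]
      have hcom1 : Commute (B i) (prodOver B (S.erase i)) :=
        S12.commute_prodOver hBc fun j _ => hBc i j
      have hcom2 : Commute (A i) (prodOver B (S.erase i)) :=
        S12.commute_prodOver hBc fun j hj => hABc i j fun h => herase (h ▸ hj)
      have step1 : A i (b S) = prodOver B (S.erase i) (A i (B i ψ)) := by
        rw [hbS, hSdecomp]
        calc A i ((B i * prodOver B (S.erase i)) ψ)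
            = A i ((prodOver B (S.erase i) * B i) ψ) := by rw [hcom1.eq]
          _ = (A i * (prodOver B (S.erase i) * B i)) ψ := rfl
          _ = ((A i * prodOver B (S.erase i)) * B i) ψ := by rw [mul_assoc]
          _ = ((prodOver B (S.erase i) * A i) * B i) ψ := by rw [hcom2.eq]
          _ = prodOver B (S.erase i) (A i (B i ψ)) := by
              rw [mul_assoc]; rfl
      have step2 : A i (B i ψ) = -(prodOver B Finset.univ ψ) := by
        rw [d4 i, d1 i, hbS]
        congr 1
        calc B i (prodOver B (Finset.univ.erase i) ψ)
            = (B i * prodOver B (Finset.univ.erase i)) ψ := rfl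
          _ = prodOver B (symmDiff (Finset.univ.erase i) {i}) ψ := by
              rw [S12.mul_prodOver hBc hB2]
          _ = prodOver B Finset.univ ψ := by
              have hfs : symmDiff (Finset.univ.erase i) {i} = (Finset.univ : Finset (Fin n)) := by
                ext m
                by_cases hm : m = i <;>
                  simp [Finset.mem_symmDiff, Finset.mem_erase, hm]
              rw [hfs]
      have step3 : prodOver B (S.erase i) (prodOver B Finset.univ ψ)
          = b (symmDiff S (Finset.univ.erase i)) := by
        rw [hbS]
        calc prodOver B (S.erase i) (prodOver B Finset.univ ψ)
            = (prodOver B (S.erase i) * prodOver B Finset.univ) ψ := rfl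
          _ = prodOver B (symmDiff (S.erase i) Finset.univ) ψ := by
              rw [S12.prodOver_mul hBc hB2]
          _ = prodOver B (symmDiff S (Finset.univ.erase i)) ψ := by
              congr 2
              ext m
              simp only [Finset.mem_symmDiff, Finset.mem_erase, Finset.mem_univ, and_true,
                true_and]
              by_cases hm : m = i
              · first | (simp [hm, hiS]; tauto) | (simp [hm, hiS]) | tauto
              · first | (simp [hm]; tauto) | (simp [hm]) | tauto
      rw [step1, step2, map_neg, step3, neg_one_smul]
    · rw [if_neg hiS, one_smul]
      have hcom : Commute (A i) (prodOver B S) :=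
        S12.commute_prodOver hBc fun j hj => hABc i j fun h => hiS (h ▸ hj)
      rw [hbS, hbS]
      calc A i (prodOver B S ψ)
          = (A i * prodOver B S) ψ := rfl
        _ = (prodOver B S * A i) ψ := by rw [hcom.eq]
        _ = prodOver B S (A i ψ) := rfl
        _ = prodOver B S (prodOver B (Finset.univ.erase i) ψ) := by rw [d1 i, hbS]
        _ = (prodOver B S * prodOver B (Finset.univ.erase i)) ψ := rfl
        _ = prodOver B (symmDiff S (Finset.univ.erase i)) ψ := by
            rw [S12.prodOver_mul hBc hB2]
  -- orthogonality
  have d6 : ∀ T : Finset (Fin n), T ≠ ∅ → (inner ℂ ψ (b T) : ℂ) = 0 := by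
    intro T hT
    obtain ⟨j, hj⟩ := Finset.nonempty_iff_ne_empty.mpr hT
    have step : (inner ℂ ψ (b T) : ℂ) = -(inner ℂ ψ (b T) : ℂ) := by
      conv_lhs => rw [← hplus j]
      rw [hAsa j, d5 j T, if_pos hj, neg_one_smul, inner_neg_right,
        S12.prodOver_adj hBc hBsa (Finset.univ.erase j) ψ]
      congr 2
      calc prodOver B (Finset.univ.erase j) (b (symmDiff T (Finset.univ.erase j)))
          = (prodOver B (Finset.univ.erase j) * prodOver B (symmDiff T (Finset.univ.erase j))) ψ := rfl
        _ = prodOver B (symmDiff (Finset.univ.erase j) (symmDiff T (Finset.univ.erase j))) ψ := by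
            rw [S12.prodOver_mul hBc hB2]
        _ = b T := by
            rw [hbS]
            congr 2
            rw [symmDiff_comm T (Finset.univ.erase j), symmDiff_symmDiff_cancel_left]
    have h2 : (2:ℂ) * (inner ℂ ψ (b T) : ℂ) = 0 := by linear_combination step
    exact (mul_eq_zero.mp h2).resolve_left two_ne_zero
  -- orthonormality
  have d7 : ∀ S T : Finset (Fin n), (inner ℂ (b S) (b T) : ℂ) = if S = T then 1 else 0 := by
    intro S T
    have key : (inner ℂ (b S) (b T) : ℂ) = inner ℂ ψ (b (symmDiff S T)) := by
      rw [hbS S, S12.prodOver_adj hBc hBsa S ψ]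
      congr 1
      rw [hbS T, hbS]
      calc prodOver B S (prodOver B T ψ) = (prodOver B S * prodOver B T) ψ := rfl
        _ = prodOver B (symmDiff S T) ψ := by rw [S12.prodOver_mul hBc hB2]
    rw [key]
    by_cases hST : S = T
    · rw [if_pos hST]
      have : symmDiff S T = ∅ := by rw [hST, symmDiff_self]; rfl
      rw [this, hbempty, inner_self_eq_norm_sq_to_K, hψ]
      norm_num
    · rw [if_neg hST]
      apply d6
      rw [← Finset.bot_eq_empty, Ne, symmDiff_eq_bot]
      exact hST
  -- the span
  have hVr : V = Submodule.span ℂ (Set.range b) := by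
    rw [hV]
    congr 1
    ext v
    constructor
    · rintro ⟨S, h⟩; exact ⟨S, h.symm⟩
    · rintro ⟨S, h⟩; exact ⟨S, h.symm⟩
  have hmem : ∀ S, b S ∈ V := fun S => by
    rw [hVr]; exact Submodule.subset_span ⟨S, rfl⟩
  have horth : Orthonormal ℂ b := orthonormal_iff_ite.mpr d7
  haveI hfd : FiniteDimensional ℂ V := by
    rw [hVr]; exact FiniteDimensional.span_of_finite ℂ (Set.finite_range b)
  have hrank : Module.finrank ℂ V = 2 ^ n := by
    rw [hVr, finrank_span_eq_card horth.linearIndependent, Fintype.card_finset, Fintype.card_fin]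
  refine ⟨hrank, ?_⟩
  -- orthonormal basis of V
  set b' : Finset (Fin n) → V := fun S => ⟨b S, hmem S⟩ with hb'
  have horth' : Orthonormal ℂ b' := by
    rw [orthonormal_iff_ite]
    intro S T
    rw [hb']
    rw [Submodule.coe_inner]
    exact d7 S T
  have hcardV : Fintype.card (Finset (Fin n)) = Module.finrank ℂ V := by
    rw [hrank, Fintype.card_finset, Fintype.card_fin]
  have hspanV : ⊤ ≤ Submodule.span ℂ (Set.range b') :=
    (horth'.linearIndependent.span_eq_top_of_card_eq_finrank hcardV).ge
  set obV : OrthonormalBasis (Finset (Fin n)) ℂ V := OrthonormalBasis.mk horth' hspanV with hobV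
  -- orthonormal basis of the Euclidean side
  have hworth : Orthonormal ℂ (E.w (n := n)) := E.w_orth
  have hcardE : Fintype.card (Finset (Fin n))
      = Module.finrank ℂ (EuclideanSpace ℂ (Fin n → Fin 2)) := by
    rw [finrank_euclideanSpace, Fintype.card_finset, Fintype.card_fin, Fintype.card_fun,
      Fintype.card_fin, Fintype.card_fin]
  have hspanE : ⊤ ≤ Submodule.span ℂ (Set.range (E.w (n := n))) :=
    (hworth.linearIndependent.span_eq_top_of_card_eq_finrank hcardE).ge
  set obE : OrthonormalBasis (Finset (Fin n)) ℂ (EuclideanSpace ℂ (Fin n → Fin 2)) :=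
    OrthonormalBasis.mk hworth hspanE with hobE
  set e : V ≃ₗᵢ[ℂ] EuclideanSpace ℂ (Fin n → Fin 2) := obV.repr.trans obE.repr.symm with he
  have he_b : ∀ S, e (b' S) = E.w S := by
    intro S
    have h1 : obV.repr (b' S) = EuclideanSpace.single S 1 := by
      have : b' S = obV S := by rw [hobV, OrthonormalBasis.coe_mk]
      rw [this, obV.repr_self S]
    have h2 : obE.repr (E.w S) = EuclideanSpace.single S 1 := by
      have : E.w S = obE S := by rw [hobE, OrthonormalBasis.coe_mk]
      rw [this, obE.repr_self S]
    show obE.repr.symm (obV.repr (b' S)) = E.w S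
    rw [h1, ← h2, LinearIsometryEquiv.symm_apply_apply]
  refine ⟨e, ?_⟩
  intro v hv i hAv hBv
  -- invariance of V
  have hinvA : ∀ x ∈ V, A i x ∈ V := by
    intro x hx
    rw [hVr] at hx ⊢
    induction hx using Submodule.span_induction with
    | mem y hy =>
      obtain ⟨S, rfl⟩ := hy
      rw [d5 i S]
      exact Submodule.smul_mem _ _ (Submodule.subset_span ⟨_, rfl⟩)
    | zero => rw [map_zero]; exact Submodule.zero_mem _
    | add y z _ _ hy hz => rw [map_add]; exact Submodule.add_mem _ hy hz
    | smul c y _ hy => rw [map_smul]; exact Submodule.smul_mem _ _ hy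
  have hinvB : ∀ x ∈ V, B i x ∈ V := by
    intro x hx
    rw [hVr] at hx ⊢
    induction hx using Submodule.span_induction with
    | mem y hy =>
      obtain ⟨S, rfl⟩ := hy
      rw [hBb i S]
      exact Submodule.subset_span ⟨_, rfl⟩
    | zero => rw [map_zero]; exact Submodule.zero_mem _
    | add y z _ _ hy hz => rw [map_add]; exact Submodule.add_mem _ hy hz
    | smul c y _ hy => rw [map_smul]; exact Submodule.smul_mem _ _ hy
  -- transfer via linear maps
  have keyA : ∀ u : V, e ((A i).toLinearMap.restrict hinvA u)
      = Matrix.toEuclideanLin (tensorFactor n PauliX i) (e u) := by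
    have heq : (e.toLinearEquiv.toLinearMap.comp ((A i).toLinearMap.restrict hinvA))
        = (Matrix.toEuclideanLin (tensorFactor n PauliX i)).comp e.toLinearEquiv.toLinearMap := by
      apply Module.Basis.ext obV.toBasis
      intro S
      have hbasis : obV.toBasis S = b' S := by
        rw [OrthonormalBasis.coe_toBasis, hobV, OrthonormalBasis.coe_mk]
      rw [hbasis]
      simp only [LinearMap.comp_apply]
      have h1 : (A i).toLinearMap.restrict hinvA (b' S)
          = (if i ∈ S then (-1:ℂ) else 1) • b' (symmDiff S (Finset.univ.erase i)) := by
        apply Subtype.ext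
        rw [LinearMap.restrict_apply]
        simp only [ContinuousLinearMap.coe_coe]
        rw [hb']
        simp only [SetLike.val_smul]
        exact d5 i S
      rw [h1, map_smul]
      have h2 : e.toLinearEquiv.toLinearMap (b' (symmDiff S (Finset.univ.erase i)))
          = E.w (symmDiff S (Finset.univ.erase i)) := he_b _
      have h3 : e.toLinearEquiv.toLinearMap (b' S) = E.w S := he_b S
      rw [h2, h3, E.Xw i S]
    intro u
    exact congrFun (congrArg DFunLike.coe heq) u
  have keyB : ∀ u : V, e ((B i).toLinearMap.restrict hinvB u)
      = Matrix.toEuclideanLin (tensorFactor n PauliZ i) (e u) := by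
    have heq : (e.toLinearEquiv.toLinearMap.comp ((B i).toLinearMap.restrict hinvB))
        = (Matrix.toEuclideanLin (tensorFactor n PauliZ i)).comp e.toLinearEquiv.toLinearMap := by
      apply Module.Basis.ext obV.toBasis
      intro S
      have hbasis : obV.toBasis S = b' S := by
        rw [OrthonormalBasis.coe_toBasis, hobV, OrthonormalBasis.coe_mk]
      rw [hbasis]
      simp only [LinearMap.comp_apply]
      have h1 : (B i).toLinearMap.restrict hinvB (b' S) = b' (symmDiff S {i}) := by
        apply Subtype.ext
        rw [LinearMap.restrict_apply]
        simp only [ContinuousLinearMap.coe_coe]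
        exact hBb i S
      rw [h1]
      have h2 : e.toLinearEquiv.toLinearMap (b' (symmDiff S {i})) = E.w (symmDiff S {i}) := he_b _
      have h3 : e.toLinearEquiv.toLinearMap (b' S) = E.w S := he_b S
      rw [h2, h3, E.Zw i S]
    intro u
    exact congrFun (congrArg DFunLike.coe heq) u
  constructor
  · have h1 : (⟨A i v, hAv⟩ : V) = (A i).toLinearMap.restrict hinvA ⟨v, hv⟩ := by
      apply Subtype.ext
      rw [LinearMap.restrict_apply]
      rfl
    rw [h1]
    exact keyA ⟨v, hv⟩
  · have h1 : (⟨B i v, hBv⟩ : V) = (B i).toLinearMap.restrict hinvB ⟨v, hv⟩ := by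
      apply Subtype.ext
      rw [LinearMap.restrict_apply]
      rfl
    rw [h1]
    exact keyB ⟨v, hv⟩
end

section
/- Under these hypotheses, the 2ⁿ vectors (Π_{i∈S} Bᵢ) ψ, indexed by the subsets S ⊆ {1,…,n}, are linearly independent in H; in particular, any Hilbert space supporting a state and observables that maximally violate the inequality Iₙ has dimension at least 2ⁿ. -/
section aux

variable {H : Type*} [NormedAddCommGroup H] [InnerProductSpace ℂ H] {n : ℕ}
variable {T : Fin n → H →L[ℂ] H}

lemma aux_pairwise_commute
    (hTT : ∀ i j, i ≠ j → ∀ x, T i (T j x) = T j (T i x)) (l : List (Fin n)) :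
    (l.map T).Pairwise Commute := by
  have h : ∀ a b : Fin n, Commute (T a) (T b) := by
    intro a b
    rcases eq_or_ne a b with rfl | hne
    · exact Commute.refl _
    · exact ContinuousLinearMap.ext fun x => by
        simpa [ContinuousLinearMap.mul_apply] using hTT a b hne x
  induction l with
  | nil => simp
  | cons a l ih =>
    rw [List.map_cons, List.pairwise_cons]
    exact ⟨by simp +contextual [h], ih⟩

lemma prodOver_eq_of_list
    (hTT : ∀ i j, i ≠ j → ∀ x, T i (T j x) = T j (T i x))
    {S : Finset (Fin n)} {l : List (Fin n)} (hl : (↑l : Multiset (Fin n)) = S.val) :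
    prodOver T S = (l.map T).prod := by
  have hperm : List.Perm (S.sort (· ≤ ·)) l := by
    rw [← Multiset.coe_eq_coe, Finset.sort_eq, hl]
  exact (hperm.map T).prod_eq' (aux_pairwise_commute hTT _)

lemma prodOver_empty : prodOver T ∅ = 1 := by
  simp [prodOver, Finset.sort_empty]

lemma prodOver_insert
    (hTT : ∀ i j, i ≠ j → ∀ x, T i (T j x) = T j (T i x))
    {a : Fin n} {S : Finset (Fin n)} (ha : a ∉ S) (x : H) :
    prodOver T (insert a S) x = T a (prodOver T S x) := by
  have : prodOver T (insert a S) = ((a :: S.sort (· ≤ ·)).map T).prod := by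
    refine prodOver_eq_of_list hTT ?_
    rw [Finset.insert_val_of_notMem ha, ← Multiset.cons_coe, Finset.sort_eq]
  rw [this]
  simp [prodOver, ContinuousLinearMap.mul_apply]

lemma prodOver_singleton
    (hTT : ∀ i j, i ≠ j → ∀ x, T i (T j x) = T j (T i x))
    (a : Fin n) (x : H) : prodOver T {a} x = T a x := by
  have : prodOver T ({a} : Finset (Fin n)) = ([a].map T).prod := by
    refine prodOver_eq_of_list hTT ?_
    simp
  rw [this]
  simp

lemma prodOver_comm
    (hTT : ∀ i j, i ≠ j → ∀ x, T i (T j x) = T j (T i x))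
    {S : Finset (Fin n)} {C : H →L[ℂ] H}
    (hC : ∀ j ∈ S, ∀ x, C (T j x) = T j (C x)) (x : H) :
    C (prodOver T S x) = prodOver T S (C x) := by
  induction S using Finset.induction_on with
  | empty => simp [prodOver_empty]
  | @insert a S ha ih =>
    rw [prodOver_insert hTT ha, prodOver_insert hTT ha,
      hC a (Finset.mem_insert_self a S),
      ih (fun j hj => hC j (Finset.mem_insert_of_mem hj))]

lemma prodOver_erase
    (hTT : ∀ i j, i ≠ j → ∀ x, T i (T j x) = T j (T i x))
    (hinv : ∀ i (x : H), T i (T i x) = x)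
    {a : Fin n} {S : Finset (Fin n)} (ha : a ∈ S) (x : H) :
    T a (prodOver T S x) = prodOver T (S.erase a) x := by
  have h1 : S = insert a (S.erase a) := (Finset.insert_erase ha).symm
  conv_lhs => rw [h1, prodOver_insert hTT (Finset.notMem_erase a S), hinv]

lemma prodOver_symmDiff
    (hTT : ∀ i j, i ≠ j → ∀ x, T i (T j x) = T j (T i x))
    (hinv : ∀ i (x : H), T i (T i x) = x)
    (S U : Finset (Fin n)) (x : H) :
    prodOver T S (prodOver T U x) = prodOver T (symmDiff S U) x := by
  induction S using Finset.induction_on with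
  | empty =>
    have : symmDiff (∅ : Finset (Fin n)) U = U := by
      ext m; simp [Finset.mem_symmDiff]
    rw [this]; simp [prodOver_empty]
  | @insert a S ha ih =>
    rw [prodOver_insert hTT ha, ih]
    by_cases haU : a ∈ U
    · have hmem : a ∈ symmDiff S U := by
        simp [Finset.mem_symmDiff, ha, haU]
      have hset : symmDiff (insert a S) U = (symmDiff S U).erase a := by
        ext m
        rcases eq_or_ne m a with rfl | hma
        · simp [Finset.mem_symmDiff, ha, haU]
        · simp [Finset.mem_symmDiff, Finset.mem_erase, hma]
          try tauto
      rw [hset, prodOver_erase hTT hinv hmem]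
    · have hmem : a ∉ symmDiff S U := by
        simp [Finset.mem_symmDiff, ha, haU]
      have hset : symmDiff (insert a S) U = insert a (symmDiff S U) := by
        ext m
        rcases eq_or_ne m a with rfl | hma
        · simp [Finset.mem_symmDiff, ha, haU]
        · simp [Finset.mem_symmDiff, Finset.mem_erase, hma]
          try tauto
      rw [hset, prodOver_insert hTT hmem]

lemma prodOver_adjoint
    (hTT : ∀ i j, i ≠ j → ∀ x, T i (T j x) = T j (T i x))
    (hsa : ∀ i (x y : H), (inner ℂ (T i x) y : ℂ) = inner ℂ x (T i y))
    (S : Finset (Fin n)) : ∀ (x y : H),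
    (inner ℂ (prodOver T S x) y : ℂ) = inner ℂ x (prodOver T S y) := by
  induction S using Finset.induction_on with
  | empty => intro x y; simp [prodOver_empty]
  | @insert a S ha ih =>
    intro x y
    rw [prodOver_insert hTT ha, prodOver_insert hTT ha, hsa, ih,
      prodOver_comm hTT (fun j hj z => hTT a j (fun h => ha (h ▸ hj)) z) y]

lemma aux_exists_not_mem {m : ℕ} (s : Finset (Fin m)) (h : s.card < m) :
    ∃ k, k ∉ s := by
  by_contra hc
  push_neg at hc
  have : s = Finset.univ := Finset.eq_univ_iff_forall.mpr hc
  rw [this, Finset.card_univ, Fintype.card_fin] at h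
  exact lt_irrefl _ h

end aux

/-- under the maximal-violation hypotheses for `Iₙ` (setup as in
Statement 9), the `2ⁿ` vectors `(Π_{i∈S} Bᵢ)ψ`, indexed by the subsets
`S ⊆ {1,…,n}`, are linearly independent in `H`; in particular any Hilbert space
supporting a state and observables maximally violating `Iₙ` has dimension at
least `2ⁿ`. -/
theorem stmt14 {H : Type*} [NormedAddCommGroup H] [InnerProductSpace ℂ H]
    (n : ℕ) (hn : 3 ≤ n)
    (A B : Fin n → H →L[ℂ] H)
    (hAsa : ∀ i (x y : H), (inner ℂ (A i x) y : ℂ) = inner ℂ x (A i y))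
    (hBsa : ∀ i (x y : H), (inner ℂ (B i x) y : ℂ) = inner ℂ x (B i y))
    (hAinv : ∀ i (x : H), A i (A i x) = x)
    (hBinv : ∀ i (x : H), B i (B i x) = x)
    (hAA : ∀ i j, i ≠ j → ∀ x : H, A i (A j x) = A j (A i x))
    (hAB : ∀ i j, i ≠ j → ∀ x : H, A i (B j x) = B j (A i x))
    (hBB : ∀ i j, i ≠ j → ∀ x : H, B i (B j x) = B j (B i x))
    (ψ : H) (hψ : ‖ψ‖ = 1)
    (hplus : ∀ i, A i (prodOver B (Finset.univ.erase i) ψ) = ψ)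
    (hminus : ∀ S : Finset (Fin n), S.card = 3 →
      prodOver A S (prodOver B Sᶜ ψ) = -ψ) :
    LinearIndependent ℂ (fun S : Finset (Fin n) => prodOver B S ψ) ∧
    (2 ^ n : Cardinal) ≤ Module.rank ℂ H := by
  classical
  set φ : H := prodOver B Finset.univ ψ with hφdef
  -- Step 1
  have h1 : ∀ i, prodOver B (Finset.univ.erase i) ψ = A i ψ := by
    intro i
    have := congrArg (A i) (hplus i)
    rwa [hAinv] at this
  -- Step 2
  have h2 : ∀ i, B i (A i ψ) = φ := by
    intro i
    rw [← h1 i, ← prodOver_insert hBB (Finset.notMem_erase i Finset.univ),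
      Finset.insert_erase (Finset.mem_univ i)]
  -- Step 3
  have h3 : ∀ i, A i (B i φ) = ψ := by
    intro i
    rw [← h2 i, hBinv, hAinv]
  -- Step 4
  have h4 : ∀ i j, i ≠ j → A i (B i (A j (B j ψ))) = -ψ := by
    intro i j hij
    obtain ⟨k, hk⟩ := aux_exists_not_mem ({i, j} : Finset (Fin n)) (by
      calc ({i, j} : Finset (Fin n)).card ≤ 2 := Finset.card_insert_le _ _ |>.trans (by simp)
        _ < 3 := by norm_num
        _ ≤ n := hn)
    have hki : k ≠ i := fun h => hk (by simp [h])
    have hkj : k ≠ j := fun h => hk (by simp [h])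
    have hTcard : ({i, j, k} : Finset (Fin n)).card = 3 := by
      rw [Finset.card_insert_of_notMem (by simp [hij, hki.symm]),
        Finset.card_insert_of_notMem (by simp [hkj.symm])]
      simp
    have hm := hminus {i, j, k} hTcard
    have hcompl : prodOver B ({i, j, k} : Finset (Fin n))ᶜ ψ
        = prodOver B {i, j, k} φ := by
      have hset : symmDiff ({i, j, k} : Finset (Fin n)) Finset.univ
          = ({i, j, k} : Finset (Fin n))ᶜ := by
        ext m; simp [Finset.mem_symmDiff]
      rw [hφdef, prodOver_symmDiff hBB hBinv, hset]
    rw [hcompl] at hm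
    have hunfoldB : prodOver B ({i, j, k} : Finset (Fin n)) φ
        = B i (B j (B k φ)) := by
      rw [prodOver_insert hBB (by simp [hij, hki.symm]),
        prodOver_insert hBB (by simp [hkj.symm]),
        prodOver_singleton hBB]
    have hunfoldA : ∀ x, prodOver A ({i, j, k} : Finset (Fin n)) x
        = A i (A j (A k x)) := by
      intro x
      rw [prodOver_insert hAA (by simp [hij, hki.symm]),
        prodOver_insert hAA (by simp [hkj.symm]),
        prodOver_singleton hAA]
    rw [hunfoldB, hunfoldA, hAB k i hki, hAB k j hkj, h3 k, hAB j i hij.symm] at hm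
    exact hm
  -- Step 5
  have h5 : ∀ j, A j (B j ψ) = -φ := by
    intro j
    obtain ⟨i, hi⟩ := aux_exists_not_mem ({j} : Finset (Fin n)) (by
      have : ({j} : Finset (Fin n)).card = 1 := Finset.card_singleton j
      omega)
    have hij : i ≠ j := by simpa using hi
    have h := congrArg (A i) (h4 i j hij)
    rw [hAinv] at h
    have h' := congrArg (B i) h
    rw [hBinv, map_neg, map_neg, h2 i] at h'
    exact h'
  -- Step 6
  have h6 : ∀ (U : Finset (Fin n)) (i : Fin n), i ∈ U →
      A i (prodOver B U ψ) = -(prodOver B ((U.erase i)ᶜ) ψ) := by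
    intro U i hi
    have hU : prodOver B U ψ = prodOver B (U.erase i) (B i ψ) := by
      have hsingle : B i ψ = prodOver B {i} ψ := by
        rw [prodOver_singleton hBB]
      have hset : symmDiff (U.erase i) ({i} : Finset (Fin n)) = U := by
        ext m
        rcases eq_or_ne m i with rfl | hmi
        · simp [Finset.mem_symmDiff, hi]
        · simp [Finset.mem_symmDiff, hmi]
      rw [hsingle, prodOver_symmDiff hBB hBinv, hset]
    have hset2 : symmDiff (U.erase i) (Finset.univ : Finset (Fin n))
        = (U.erase i)ᶜ := by
      ext m; simp [Finset.mem_symmDiff]; tauto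
    rw [hU, prodOver_comm hBB (fun j hj z =>
        hAB i j (Ne.symm (Finset.mem_erase.mp hj).1) z) (B i ψ), h5 i, map_neg,
      hφdef, prodOver_symmDiff hBB hBinv, hset2]
  -- Step 7 : orthogonality
  have h7 : ∀ U : Finset (Fin n), U.Nonempty → (inner ℂ ψ (prodOver B U ψ) : ℂ) = 0 := by
    intro U hUne
    obtain ⟨i, hi⟩ := hUne
    have hset : symmDiff (Finset.univ.erase i) ((U.erase i)ᶜ) = U := by
      ext m
      rcases eq_or_ne m i with rfl | hmi
      · simp [Finset.mem_symmDiff, hi]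
      · simp [Finset.mem_symmDiff, hmi]
    have hkey : (inner ℂ ψ (prodOver B U ψ) : ℂ)
        = inner ℂ (A i ψ) (A i (prodOver B U ψ)) := by
      rw [← hAsa i, hAinv]
    rw [h6 U i hi, ← h1 i, inner_neg_right,
      prodOver_adjoint hBB hBsa, prodOver_symmDiff hBB hBinv, hset] at hkey
    have h2c : (2 : ℂ) * (inner ℂ ψ (prodOver B U ψ) : ℂ) = 0 := by
      linear_combination hkey
    have := mul_eq_zero.mp h2c
    simpa using this
  -- Step 8 : orthonormality
  have h8 : Orthonormal ℂ (fun S : Finset (Fin n) => prodOver B S ψ) := by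
    rw [orthonormal_iff_ite]
    intro S T
    have hST : (inner ℂ (prodOver B S ψ) (prodOver B T ψ) : ℂ)
        = inner ℂ ψ (prodOver B (symmDiff S T) ψ) := by
      rw [prodOver_adjoint hBB hBsa, prodOver_symmDiff hBB hBinv]
    rw [hST]
    by_cases hEq : S = T
    · have : symmDiff S T = ∅ := by rw [hEq, symmDiff_self]; rfl
      rw [this, prodOver_empty]
      simp [hEq, inner_self_eq_norm_sq_to_K, hψ]
    · have hne : (symmDiff S T).Nonempty := by
        rw [Finset.nonempty_iff_ne_empty]
        intro hc
        exact hEq (symmDiff_eq_bot.mp hc)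
      rw [h7 _ hne]
      simp [hEq]
  refine ⟨h8.linearIndependent, ?_⟩
  -- rank bound
  have hli := h8.linearIndependent
  have hcard := hli.cardinal_lift_le_rank
  have hmk : (Cardinal.mk (Finset (Fin n)) : Cardinal) = ((2 ^ n : ℕ) : Cardinal) := by
    rw [Cardinal.mk_fintype]
    simp
  rw [hmk] at hcard
  simp only [Cardinal.lift_natCast, Cardinal.lift_id] at hcard
  have : ((2 ^ n : ℕ) : Cardinal) = (2 ^ n : Cardinal) := by push_cast; ring
  rw [this] at hcard
  simpa using hcard
end

section
/- Under these hypotheses (the four correlators of the inequality I₃ are each within ε of their ideal values), one has ‖(AᵢBᵢ + BᵢAᵢ)ψ‖ ≤ 4√(2ε) for every i ∈ {1,2,3}. -/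
theorem aux_near16 {H : Type*} [NormedAddCommGroup H] [InnerProductSpace ℂ H]
    (ψ p : H) (hψ : ‖ψ‖ = 1) (hp : ‖p‖ = 1) (ε : ℝ)
    (h : 1 - ε ≤ (inner ℂ ψ p : ℂ).re) : ‖p - ψ‖ ≤ Real.sqrt (2*ε) := by
  have hsq : ‖p - ψ‖ ^ 2 ≤ 2 * ε := by
    have h1 := @norm_sub_sq ℂ H _ _ _ p ψ
    have h2 := @inner_re_symm ℂ H _ _ _ p ψ
    simp only [RCLike.re_to_complex] at h1 h2
    rw [h1, hp, hψ, h2]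
    nlinarith
  calc ‖p - ψ‖ = Real.sqrt (‖p - ψ‖ ^ 2) := (Real.sqrt_sq (norm_nonneg _)).symm
    _ ≤ Real.sqrt (2 * ε) := Real.sqrt_le_sqrt hsq

/-- in a complex Hilbert space `H`, let `ψ` be a unit vector,
`0 ≤ ε ≤ 1`, and let `A₁,A₂,A₃,B₁,B₂,B₃` be observables satisfying the
compatibility relations.  If the four correlators of `I₃` are each within `ε` of
their ideal values (`Re⟨ψ, A₁B₂B₃ψ⟩ ≥ 1−ε`, `Re⟨ψ, B₁A₂B₃ψ⟩ ≥ 1−ε`,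
`Re⟨ψ, B₁B₂A₃ψ⟩ ≥ 1−ε`, `−Re⟨ψ, A₁A₂A₃ψ⟩ ≥ 1−ε`), then
`‖(AᵢBᵢ + BᵢAᵢ)ψ‖ ≤ 4√(2ε)` for every `i ∈ {1,2,3}`. -/
theorem stmt16 {H : Type*} [NormedAddCommGroup H] [InnerProductSpace ℂ H]
    (A B : Fin 3 → H →L[ℂ] H)
    (hAsa : ∀ i (x y : H), (inner ℂ (A i x) y : ℂ) = inner ℂ x (A i y))
    (hBsa : ∀ i (x y : H), (inner ℂ (B i x) y : ℂ) = inner ℂ x (B i y))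
    (hAinv : ∀ i (x : H), A i (A i x) = x)
    (hBinv : ∀ i (x : H), B i (B i x) = x)
    (hAA : ∀ i j, i ≠ j → ∀ x : H, A i (A j x) = A j (A i x))
    (hAB : ∀ i j, i ≠ j → ∀ x : H, A i (B j x) = B j (A i x))
    (hBB : ∀ i j, i ≠ j → ∀ x : H, B i (B j x) = B j (B i x))
    (ψ : H) (hψ : ‖ψ‖ = 1)
    (ε : ℝ) (hε0 : 0 ≤ ε) (hε1 : ε ≤ 1)
    (h1 : (inner ℂ ψ (A 0 (B 1 (B 2 ψ))) : ℂ).re ≥ 1 - ε)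
    (h2 : (inner ℂ ψ (B 0 (A 1 (B 2 ψ))) : ℂ).re ≥ 1 - ε)
    (h3 : (inner ℂ ψ (B 0 (B 1 (A 2 ψ))) : ℂ).re ≥ 1 - ε)
    (h4 : -(inner ℂ ψ (A 0 (A 1 (A 2 ψ))) : ℂ).re ≥ 1 - ε) :
    ∀ i, ‖A i (B i ψ) + B i (A i ψ)‖ ≤ 4 * Real.sqrt (2 * ε) := by
  -- norm preservation
  have normA : ∀ i (x : H), ‖A i x‖ = ‖x‖ := by
    intro i x
    have h : (inner ℂ (A i x) (A i x) : ℂ) = inner ℂ x x := by rw [hAsa, hAinv]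
    have h' := congrArg Complex.re h
    rw [norm_eq_sqrt_re_inner (𝕜 := ℂ), norm_eq_sqrt_re_inner (𝕜 := ℂ) x]
    simp only [RCLike.re_to_complex]
    rw [h']
  have normB : ∀ i (x : H), ‖B i x‖ = ‖x‖ := by
    intro i x
    have h : (inner ℂ (B i x) (B i x) : ℂ) = inner ℂ x x := by rw [hBsa, hBinv]
    have h' := congrArg Complex.re h
    rw [norm_eq_sqrt_re_inner (𝕜 := ℂ), norm_eq_sqrt_re_inner (𝕜 := ℂ) x]
    simp only [RCLike.re_to_complex]
    rw [h']
  set δ := Real.sqrt (2 * ε) with hδ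
  -- the four near-identities
  have hp : ‖A 0 (B 1 (B 2 ψ)) - ψ‖ ≤ δ :=
    aux_near16 ψ _ hψ (by rw [normA, normB, normB, hψ]) ε h1
  have hq : ‖B 0 (A 1 (B 2 ψ)) - ψ‖ ≤ δ :=
    aux_near16 ψ _ hψ (by rw [normB, normA, normB, hψ]) ε h2
  have hr : ‖B 0 (B 1 (A 2 ψ)) - ψ‖ ≤ δ :=
    aux_near16 ψ _ hψ (by rw [normB, normB, normA, hψ]) ε h3
  have hs : ‖A 0 (A 1 (A 2 ψ)) + ψ‖ ≤ δ := by
    have := aux_near16 ψ (-(A 0 (A 1 (A 2 ψ)))) hψ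
      (by rw [norm_neg, normA, normA, normA, hψ]) ε
      (by rw [inner_neg_right]; simpa using h4)
    calc ‖A 0 (A 1 (A 2 ψ)) + ψ‖ = ‖-(A 0 (A 1 (A 2 ψ))) - ψ‖ := by
          rw [← norm_neg]; congr 1; abel
      _ ≤ δ := this
  -- oriented commutation rules added as local equalities
  have cAA10 : ∀ x : H, A 1 (A 0 x) = A 0 (A 1 x) := hAA 1 0 (by decide)
  have cAA20 : ∀ x : H, A 2 (A 0 x) = A 0 (A 2 x) := hAA 2 0 (by decide)
  have cAA21 : ∀ x : H, A 2 (A 1 x) = A 1 (A 2 x) := hAA 2 1 (by decide)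
  have cBB10 : ∀ x : H, B 1 (B 0 x) = B 0 (B 1 x) := hBB 1 0 (by decide)
  have cBB20 : ∀ x : H, B 2 (B 0 x) = B 0 (B 2 x) := hBB 2 0 (by decide)
  have cBB21 : ∀ x : H, B 2 (B 1 x) = B 1 (B 2 x) := hBB 2 1 (by decide)
  have cAB10 : ∀ x : H, A 1 (B 0 x) = B 0 (A 1 x) := hAB 1 0 (by decide)
  have cAB20 : ∀ x : H, A 2 (B 0 x) = B 0 (A 2 x) := hAB 2 0 (by decide)
  have cAB21 : ∀ x : H, A 2 (B 1 x) = B 1 (A 2 x) := hAB 2 1 (by decide)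
  have cBA10 : ∀ x : H, B 1 (A 0 x) = A 0 (B 1 x) := fun x => (hAB 0 1 (by decide) x).symm
  have cBA20 : ∀ x : H, B 2 (A 0 x) = A 0 (B 2 x) := fun x => (hAB 0 2 (by decide) x).symm
  have cBA21 : ∀ x : H, B 2 (A 1 x) = A 1 (B 2 x) := fun x => (hAB 1 2 (by decide) x).symm
  -- abbreviations for the four observables applied to arbitrary vectors,
  -- bounds for composed states
  have hPq : ‖A 0 (B 1 (B 2 (B 0 (A 1 (B 2 ψ))))) - ψ‖ ≤ 2 * δ := by
    have e : A 0 (B 1 (B 2 (B 0 (A 1 (B 2 ψ))))) - ψ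
        = A 0 (B 1 (B 2 (B 0 (A 1 (B 2 ψ)) - ψ))) + (A 0 (B 1 (B 2 ψ)) - ψ) := by
      simp only [map_sub]; abel
    rw [e]
    calc ‖_ + _‖ ≤ ‖A 0 (B 1 (B 2 (B 0 (A 1 (B 2 ψ)) - ψ)))‖ + ‖A 0 (B 1 (B 2 ψ)) - ψ‖ :=
          norm_add_le _ _
      _ ≤ 2 * δ := by rw [normA, normB, normB]; linarith
  have hPr : ‖A 0 (B 1 (B 2 (B 0 (B 1 (A 2 ψ))))) - ψ‖ ≤ 2 * δ := by
    have e : A 0 (B 1 (B 2 (B 0 (B 1 (A 2 ψ))))) - ψ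
        = A 0 (B 1 (B 2 (B 0 (B 1 (A 2 ψ)) - ψ))) + (A 0 (B 1 (B 2 ψ)) - ψ) := by
      simp only [map_sub]; abel
    rw [e]
    calc ‖_ + _‖ ≤ ‖A 0 (B 1 (B 2 (B 0 (B 1 (A 2 ψ)) - ψ)))‖ + ‖A 0 (B 1 (B 2 ψ)) - ψ‖ :=
          norm_add_le _ _
      _ ≤ 2 * δ := by rw [normA, normB, normB]; linarith
  have hRs : ‖B 0 (B 1 (A 2 (A 0 (A 1 (A 2 ψ))))) + ψ‖ ≤ 2 * δ := by
    have e : B 0 (B 1 (A 2 (A 0 (A 1 (A 2 ψ))))) + ψ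
        = B 0 (B 1 (A 2 (A 0 (A 1 (A 2 ψ)) + ψ))) - (B 0 (B 1 (A 2 ψ)) - ψ) := by
      simp only [map_add]; abel
    rw [e]
    calc ‖_ - _‖ ≤ ‖B 0 (B 1 (A 2 (A 0 (A 1 (A 2 ψ)) + ψ)))‖ + ‖B 0 (B 1 (A 2 ψ)) - ψ‖ :=
          norm_sub_le _ _
      _ ≤ 2 * δ := by rw [normB, normB, normA]; linarith
  have hSr : ‖A 0 (A 1 (A 2 (B 0 (B 1 (A 2 ψ))))) + ψ‖ ≤ 2 * δ := by
    have e : A 0 (A 1 (A 2 (B 0 (B 1 (A 2 ψ))))) + ψ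
        = A 0 (A 1 (A 2 (B 0 (B 1 (A 2 ψ)) - ψ))) + (A 0 (A 1 (A 2 ψ)) + ψ) := by
      simp only [map_sub]; abel
    rw [e]
    calc ‖_ + _‖ ≤ ‖A 0 (A 1 (A 2 (B 0 (B 1 (A 2 ψ)) - ψ)))‖ + ‖A 0 (A 1 (A 2 ψ)) + ψ‖ :=
          norm_add_le _ _
      _ ≤ 2 * δ := by rw [normA, normA, normA]; linarith
  have hSq : ‖A 0 (A 1 (A 2 (B 0 (A 1 (B 2 ψ))))) + ψ‖ ≤ 2 * δ := by
    have e : A 0 (A 1 (A 2 (B 0 (A 1 (B 2 ψ))))) + ψ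
        = A 0 (A 1 (A 2 (B 0 (A 1 (B 2 ψ)) - ψ))) + (A 0 (A 1 (A 2 ψ)) + ψ) := by
      simp only [map_sub]; abel
    rw [e]
    calc ‖_ + _‖ ≤ ‖A 0 (A 1 (A 2 (B 0 (A 1 (B 2 ψ)) - ψ)))‖ + ‖A 0 (A 1 (A 2 ψ)) + ψ‖ :=
          norm_add_le _ _
      _ ≤ 2 * δ := by rw [normA, normA, normA]; linarith
  intro i
  fin_cases i
  · show ‖A 0 (B 0 ψ) + B 0 (A 0 ψ)‖ ≤ 4 * δ
    -- i = 0 : B₁A₁ (A₀B₀ + B₀A₀) ψ = PQψ + RSψ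
    have key : B 1 (A 1 (A 0 (B 0 ψ) + B 0 (A 0 ψ)))
        = A 0 (B 1 (B 2 (B 0 (A 1 (B 2 ψ))))) + B 0 (B 1 (A 2 (A 0 (A 1 (A 2 ψ))))) := by
      simp only [map_add, cAA10, cAA20, cAA21, cBB10, cBB20, cBB21, cAB10, cAB20, cAB21,
        cBA10, cBA20, cBA21, hAinv, hBinv]
    have hn : ‖A 0 (B 0 ψ) + B 0 (A 0 ψ)‖
        = ‖B 1 (A 1 (A 0 (B 0 ψ) + B 0 (A 0 ψ)))‖ := by rw [normB, normA]
    rw [hn, key]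
    have e : A 0 (B 1 (B 2 (B 0 (A 1 (B 2 ψ))))) + B 0 (B 1 (A 2 (A 0 (A 1 (A 2 ψ)))))
        = (A 0 (B 1 (B 2 (B 0 (A 1 (B 2 ψ))))) - ψ)
          + (B 0 (B 1 (A 2 (A 0 (A 1 (A 2 ψ))))) + ψ) := by abel
    rw [e]
    calc ‖_ + _‖ ≤ ‖A 0 (B 1 (B 2 (B 0 (A 1 (B 2 ψ))))) - ψ‖
          + ‖B 0 (B 1 (A 2 (A 0 (A 1 (A 2 ψ))))) + ψ‖ := norm_add_le _ _
      _ ≤ 4 * δ := by linarith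
  · show ‖A 1 (B 1 ψ) + B 1 (A 1 ψ)‖ ≤ 4 * δ
    -- i = 1 : A₀B₀ (B₁A₁ + A₁B₁) ψ = PQψ + SRψ
    have key : A 0 (B 0 (A 1 (B 1 ψ) + B 1 (A 1 ψ)))
        = A 0 (A 1 (A 2 (B 0 (B 1 (A 2 ψ))))) + A 0 (B 1 (B 2 (B 0 (A 1 (B 2 ψ))))) := by
      simp only [map_add, cAA10, cAA20, cAA21, cBB10, cBB20, cBB21, cAB10, cAB20, cAB21,
        cBA10, cBA20, cBA21, hAinv, hBinv]
    have hn : ‖A 1 (B 1 ψ) + B 1 (A 1 ψ)‖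
        = ‖A 0 (B 0 (A 1 (B 1 ψ) + B 1 (A 1 ψ)))‖ := by rw [normA, normB]
    rw [hn, key]
    have e : A 0 (A 1 (A 2 (B 0 (B 1 (A 2 ψ))))) + A 0 (B 1 (B 2 (B 0 (A 1 (B 2 ψ)))))
        = (A 0 (A 1 (A 2 (B 0 (B 1 (A 2 ψ))))) + ψ)
          + (A 0 (B 1 (B 2 (B 0 (A 1 (B 2 ψ))))) - ψ) := by abel
    rw [e]
    calc ‖_ + _‖ ≤ ‖A 0 (A 1 (A 2 (B 0 (B 1 (A 2 ψ))))) + ψ‖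
          + ‖A 0 (B 1 (B 2 (B 0 (A 1 (B 2 ψ))))) - ψ‖ := norm_add_le _ _
      _ ≤ 4 * δ := by linarith
  · show ‖A 2 (B 2 ψ) + B 2 (A 2 ψ)‖ ≤ 4 * δ
    -- i = 2 : A₀B₀ (A₂B₂ + B₂A₂) ψ = SQψ + PRψ
    have key : A 0 (B 0 (A 2 (B 2 ψ) + B 2 (A 2 ψ)))
        = A 0 (A 1 (A 2 (B 0 (A 1 (B 2 ψ))))) + A 0 (B 1 (B 2 (B 0 (B 1 (A 2 ψ))))) := by
      simp only [map_add, cAA10, cAA20, cAA21, cBB10, cBB20, cBB21, cAB10, cAB20, cAB21,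
        cBA10, cBA20, cBA21, hAinv, hBinv]
    have hn : ‖A 2 (B 2 ψ) + B 2 (A 2 ψ)‖
        = ‖A 0 (B 0 (A 2 (B 2 ψ) + B 2 (A 2 ψ)))‖ := by rw [normA, normB]
    rw [hn, key]
    have e : A 0 (A 1 (A 2 (B 0 (A 1 (B 2 ψ))))) + A 0 (B 1 (B 2 (B 0 (B 1 (A 2 ψ)))))
        = (A 0 (A 1 (A 2 (B 0 (A 1 (B 2 ψ))))) + ψ)
          + (A 0 (B 1 (B 2 (B 0 (B 1 (A 2 ψ))))) - ψ) := by abel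
    rw [e]
    calc ‖_ + _‖ ≤ ‖A 0 (A 1 (A 2 (B 0 (A 1 (B 2 ψ))))) + ψ‖
          + ‖A 0 (B 1 (B 2 (B 0 (B 1 (A 2 ψ))))) - ψ‖ := norm_add_le _ _
      _ ≤ 4 * δ := by linarith
end

section
/- (Jordan's lemma.) Let A and B be self-adjoint involutions on a finite-dimensional complex inner product space H. Then H decomposes as an orthogonal internal direct sum H = ⊕_l H_l of subspaces H_l, each of dimension 1 or 2, such that every H_l is invariant under both A and B (A(H_l) ⊆ H_l and B(H_l) ⊆ H_l for all l). -/
open Module Submodule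

theorem aux18 : ∀ (n : ℕ) {H : Type*} [NormedAddCommGroup H] [InnerProductSpace ℂ H]
    [FiniteDimensional ℂ H] (A B : H →ₗ[ℂ] H),
    (∀ x y : H, (inner ℂ (A x) y : ℂ) = inner ℂ x (A y)) →
    (∀ x y : H, (inner ℂ (B x) y : ℂ) = inner ℂ x (B y)) →
    (∀ x, A (A x) = x) → (∀ x, B (B x) = x) →
    Module.finrank ℂ H = n →
    ∃ (m : ℕ) (W : Fin m → Submodule ℂ H),
      (∀ l, Module.finrank ℂ (W l) = 1 ∨ Module.finrank ℂ (W l) = 2) ∧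
      (∀ l l', l ≠ l' → ∀ x ∈ W l, ∀ y ∈ W l', (inner ℂ x y : ℂ) = 0) ∧
      (∀ l, ∀ x ∈ W l, A x ∈ W l ∧ B x ∈ W l) ∧
      (⨆ l, W l) = ⊤ := by
  intro n
  induction n using Nat.strong_induction_on with
  | _ n ih =>
  intro H _ _ _ A B hAsa hBsa hA2 hB2 hrank
  classical
  by_cases hn : n = 0
  · subst hn
    have hsub : Subsingleton H := Module.finrank_zero_iff.mp hrank
    refine ⟨0, ![], by simp, by simp, by simp, ?_⟩
    rw [eq_top_iff]
    intro x _
    have : x = 0 := Subsingleton.elim x 0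
    simp [this]
  · have hnt : Nontrivial H := by
      have : 0 < finrank ℂ H := by omega
      exact Module.finrank_pos_iff.mp this
    -- eigenvector of A ∘ B
    obtain ⟨μ, hμ⟩ := Module.End.exists_eigenvalue (A ∘ₗ B : Module.End ℂ H)
    obtain ⟨v, hv⟩ := hμ.exists_hasEigenvector
    have hveq : A (B v) = μ • v := hv.apply_eq_smul
    have hv0 : v ≠ 0 := hv.right
    have hμ0 : μ ≠ 0 := by
      intro h
      apply hv0
      have hBv : B v = 0 := by
        have := congrArg A hveq
        rw [hA2, h, zero_smul, map_zero] at this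
        exact this
      have := congrArg B hBv
      rwa [hB2, map_zero] at this
    set W : Submodule ℂ H := Submodule.span ℂ {v, B v} with hW
    have hvW : v ∈ W := Submodule.subset_span (by simp)
    have hBvW : B v ∈ W := Submodule.subset_span (by simp)
    have hAv : A v = μ⁻¹ • B v := by
      have := congrArg A hveq
      rw [hA2, map_smul] at this
      rw [this, smul_smul, inv_mul_cancel₀ hμ0, one_smul]
    have hAW : ∀ x ∈ W, A x ∈ W := by
      intro x hx
      induction hx using Submodule.span_induction with
      | mem x hx =>
        rcases hx with h | h
        · rw [h, hAv]; exact W.smul_mem _ hBvW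
        · simp only [Set.mem_singleton_iff] at h
          rw [h, hveq]; exact W.smul_mem _ hvW
      | zero => simp
      | add x y _ _ hx hy => rw [map_add]; exact W.add_mem hx hy
      | smul c x _ hx => rw [map_smul]; exact W.smul_mem c hx
    have hBW : ∀ x ∈ W, B x ∈ W := by
      intro x hx
      induction hx using Submodule.span_induction with
      | mem x hx =>
        rcases hx with h | h
        · rw [h]; exact hBvW
        · simp only [Set.mem_singleton_iff] at h
          rw [h, hB2]; exact hvW
      | zero => simp
      | add x y _ _ hx hy => rw [map_add]; exact W.add_mem hx hy
      | smul c x _ hx => rw [map_smul]; exact W.smul_mem c hx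
    -- orthogonal complement
    set K : Submodule ℂ H := Wᗮ with hK
    have hAK : ∀ x ∈ K, A x ∈ K := by
      intro x hx
      rw [Submodule.mem_orthogonal]
      intro u hu
      rw [← hAsa u x]
      exact hx (A u) (hAW u hu)
    have hBK : ∀ x ∈ K, B x ∈ K := by
      intro x hx
      rw [Submodule.mem_orthogonal]
      intro u hu
      rw [← hBsa u x]
      exact hx (B u) (hBW u hu)
    set A' : K →ₗ[ℂ] K := A.restrict hAK with hA'
    set B' : K →ₗ[ℂ] K := B.restrict hBK with hB'
    have hA'sa : ∀ x y : K, (inner ℂ (A' x) y : ℂ) = inner ℂ x (A' y) := by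
      intro x y
      simp only [hA', Submodule.coe_inner, LinearMap.restrict_coe_apply]
      exact hAsa x y
    have hB'sa : ∀ x y : K, (inner ℂ (B' x) y : ℂ) = inner ℂ x (B' y) := by
      intro x y
      simp only [hB', Submodule.coe_inner, LinearMap.restrict_coe_apply]
      exact hBsa x y
    have hA'2 : ∀ x : K, A' (A' x) = x := by
      intro x
      apply Subtype.ext
      simp only [hA', LinearMap.restrict_coe_apply]
      exact hA2 x
    have hB'2 : ∀ x : K, B' (B' x) = x := by
      intro x
      apply Subtype.ext
      simp only [hB', LinearMap.restrict_coe_apply]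
      exact hB2 x
    -- dimension estimates
    have hWpos : 0 < finrank ℂ W := by
      have hnt' : Nontrivial W :=
        ⟨⟨⟨v, hvW⟩, 0, fun h => hv0 (congrArg Subtype.val h)⟩⟩
      exact Module.finrank_pos_iff.mpr hnt'
    have hWle : finrank ℂ W ≤ 2 := by
      have h := finrank_span_finset_le_card (R := ℂ) ({v, B v} : Finset H)
      have hco : (({v, B v} : Finset H) : Set H) = ({v, B v} : Set H) := by simp
      have hcard : ({v, B v} : Finset H).card ≤ 2 :=
        (Finset.card_insert_le _ _).trans (by simp)
      unfold Set.finrank at h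
      rw [hco] at h
      exact h.trans hcard
    have hsum : finrank ℂ W + finrank ℂ K = n := by
      rw [← hrank]
      exact Submodule.finrank_add_finrank_orthogonal W
    have hlt : finrank ℂ K < n := by omega
    obtain ⟨m, W', h1, h2, h3, h4⟩ := ih (finrank ℂ K) hlt A' B' hA'sa hB'sa hA'2 hB'2 rfl
    refine ⟨m + 1, Fin.cons W (fun i => (W' i).map K.subtype), ?_, ?_, ?_, ?_⟩
    · intro l
      induction l using Fin.cases with
      | zero =>
        rw [Fin.cons_zero]
        omega
      | succ i =>
        rw [Fin.cons_succ, Submodule.finrank_map_subtype_eq]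
        exact h1 i
    · -- orthogonality
      have hmapK : ∀ (i : Fin m) (x : H), x ∈ (W' i).map K.subtype → x ∈ K := by
        intro i x hx
        exact Submodule.map_subtype_le K (W' i) hx
      have hWK : ∀ x ∈ W, ∀ y ∈ K, (inner ℂ x y : ℂ) = 0 := by
        intro x hx y hy
        exact hy x hx
      intro l l'
      induction l using Fin.cases with
      | zero =>
        induction l' using Fin.cases with
        | zero => intro h; exact absurd rfl h
        | succ i =>
          intro _ x hx y hy
          rw [Fin.cons_zero] at hx
          rw [Fin.cons_succ] at hy
          exact hWK x hx y (hmapK i y hy)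
      | succ i =>
        induction l' using Fin.cases with
        | zero =>
          intro _ x hx y hy
          rw [Fin.cons_succ] at hx
          rw [Fin.cons_zero] at hy
          rw [← inner_conj_symm, hWK y hy x (hmapK i x hx)]
          simp
        | succ j =>
          intro hij x hx y hy
          rw [Fin.cons_succ] at hx hy
          obtain ⟨x', hx', rfl⟩ := hx
          obtain ⟨y', hy', rfl⟩ := hy
          have hijne : i ≠ j := by
            intro h; exact hij (by rw [h])
          have := h2 i j hijne x' hx' y' hy'
          rwa [Submodule.coe_inner] at this
    · -- invariance
      intro l
      induction l using Fin.cases with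
      | zero =>
        intro x hx
        rw [Fin.cons_zero] at hx ⊢
        exact ⟨hAW x hx, hBW x hx⟩
      | succ i =>
        intro x hx
        rw [Fin.cons_succ] at hx ⊢
        obtain ⟨x', hx', rfl⟩ := hx
        obtain ⟨hA'x, hB'x⟩ := h3 i x' hx'
        exact ⟨⟨A' x', hA'x, rfl⟩, ⟨B' x', hB'x, rfl⟩⟩
    · -- supremum
      rw [eq_top_iff]
      have htop : W ⊔ K = ⊤ := Submodule.sup_orthogonal_of_hasOrthogonalProjection
      rw [← htop]
      apply sup_le
      · exact le_iSup_of_le 0 (by rw [Fin.cons_zero])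
      · calc K = Submodule.map K.subtype ⊤ := by
              rw [Submodule.map_top, Submodule.range_subtype]
          _ = Submodule.map K.subtype (⨆ l, W' l) := by rw [h4]
          _ ≤ ⨆ l, Fin.cons W (fun i => (W' i).map K.subtype) l := by
              rw [Submodule.map_iSup]
              refine iSup_le fun i => le_iSup_of_le i.succ ?_
              rw [Fin.cons_succ]

/-- Jordan's lemma: if `A`, `B` are self-adjoint involutions on a
finite-dimensional complex inner product space `H`, then `H` decomposes as an
orthogonal internal direct sum `H = ⊕_l H_l` of subspaces of dimension `1` or `2`,
each invariant under both `A` and `B`. -/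
theorem stmt18 {H : Type*} [NormedAddCommGroup H] [InnerProductSpace ℂ H]
    [FiniteDimensional ℂ H]
    (A B : H →ₗ[ℂ] H)
    (hAsa : ∀ x y : H, (inner ℂ (A x) y : ℂ) = inner ℂ x (A y))
    (hBsa : ∀ x y : H, (inner ℂ (B x) y : ℂ) = inner ℂ x (B y))
    (hA2 : ∀ x, A (A x) = x) (hB2 : ∀ x, B (B x) = x) :
    ∃ (m : ℕ) (W : Fin m → Submodule ℂ H),
      (∀ l, Module.finrank ℂ (W l) = 1 ∨ Module.finrank ℂ (W l) = 2) ∧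
      (∀ l l', l ≠ l' → ∀ x ∈ W l, ∀ y ∈ W l', (inner ℂ x y : ℂ) = 0) ∧
      (∀ l, ∀ x ∈ W l, A x ∈ W l ∧ B x ∈ W l) ∧
      (⨆ l, W l) = ⊤ :=
  aux18 (Module.finrank ℂ H) A B hAsa hBsa hA2 hB2 rfl
end
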